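/- The von Neumann reduced entropy S_vN satisfies the superposition axiom (P4): if ψ₁,…,ψ_m are mutually Schmidt orthogonal unit vectors in H₁ ⊗ H₂ and λ₁,…,λ_m ∈ ℂ with ∑ᵢ |λᵢ|² = 1, then S_vN(∑ᵢ λᵢ ψᵢ) = −∑ᵢ |λᵢ|² ln|λᵢ|² + ∑ᵢ |λᵢ|² S_vN(ψᵢ). -/

import Mathlib

open scoped BigOperators ComplexOrder
open Matrix

noncomputable section

/-- Finite-dimensional complex Hilbert space of dimension `m`. -/
abbrev H (m : ℕ) := EuclideanSpace ℂ (Fin m)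

/-- The tensor product `H m ⊗ H n`, realized as `EuclideanSpace ℂ (Fin m × Fin n)`. -/
abbrev HT (m n : ℕ) := EuclideanSpace ℂ (Fin m × Fin n)

/-- Elementary tensor `a ⊗ b`. -/
def tensorVec {m n : ℕ} (a : H m) (b : H n) : HT m n :=
  WithLp.toLp 2 fun p : Fin m × Fin n => a p.1 * b p.2

/-- The projection `|ψ⟩⟨ψ|` as a matrix. -/
def proj {m n : ℕ} (ψ : HT m n) : Matrix (Fin m × Fin n) (Fin m × Fin n) ℂ :=
  Matrix.of fun x y => ψ x * (starRingEnd ℂ) (ψ y)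

/-- The projection `|a⟩⟨a|` on a single factor. -/
def proj1 {m : ℕ} (a : H m) : Matrix (Fin m) (Fin m) ℂ :=
  Matrix.of fun i j => a i * (starRingEnd ℂ) (a j)

/-- Partial trace over the second factor. -/
def ptrace2 {m n : ℕ} (M : Matrix (Fin m × Fin n) (Fin m × Fin n) ℂ) :
    Matrix (Fin m) (Fin m) ℂ :=
  Matrix.of fun i j => ∑ k : Fin n, M (i, k) (j, k)

/-- Partial trace over the first factor. -/
def ptrace1 {m n : ℕ} (M : Matrix (Fin m × Fin n) (Fin m × Fin n) ℂ) :
    Matrix (Fin n) (Fin n) ℂ :=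
  Matrix.of fun i j => ∑ k : Fin m, M (k, i) (k, j)

/-- Von Neumann entropy `-Tr(ρ ln ρ)` of a Hermitian matrix, via its eigenvalues. -/
def vnEnt {k : ℕ} {M : Matrix (Fin k) (Fin k) ℂ} (h : M.IsHermitian) : ℝ :=
  ∑ i, Real.negMulLog (h.eigenvalues i)

/-- Kronecker product of square matrices. -/
def kron {m n : ℕ} (A : Matrix (Fin m) (Fin m) ℂ) (B : Matrix (Fin n) (Fin n) ℂ) :
    Matrix (Fin m × Fin n) (Fin m × Fin n) ℂ :=
  Matrix.of fun p q => A p.1 q.1 * B p.2 q.2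

/-- Action of a matrix on a vector. -/
def matVec {m n : ℕ} (M : Matrix (Fin m × Fin n) (Fin m × Fin n) ℂ) (ψ : HT m n) :
    HT m n := WithLp.toLp 2 fun p : Fin m × Fin n => ∑ q, M p q * ψ q

/-- The canonical pure state with Schmidt coefficients `μ`. -/
def stdVec {k : ℕ} (μ : Fin k → ℝ) : HT k k :=
  WithLp.toLp 2 fun p : Fin k × Fin k => if p.1 = p.2 then (Real.sqrt (μ p.1) : ℂ) else 0

/-- Strong Schmidt orthogonality: the supports of both reduced density matrices
are orthogonal. -/
def SchmidtOrthogonal {m n : ℕ} (ψ φ : HT m n) : Prop :=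
  ptrace2 (proj ψ) * ptrace2 (proj φ) = 0 ∧ ptrace1 (proj ψ) * ptrace1 (proj φ) = 0

/-- Image of `ψ` under the tensor product of two isometric embeddings. -/
def tensorMap {m n m' n' : ℕ} (f : H m →ₗᵢ[ℂ] H m') (g : H n →ₗᵢ[ℂ] H n')
    (ψ : HT m n) : HT m' n' :=
  WithLp.toLp 2 fun p : Fin m' × Fin n' => ∑ q : Fin m × Fin n,
    ψ q * f (EuclideanSpace.single q.1 1) p.1 * g (EuclideanSpace.single q.2 1) p.2

/-- Finite probability distribution. -/
def IsProbDist {k : ℕ} (p : Fin k → ℝ) : Prop := (∀ i, 0 ≤ p i) ∧ ∑ i, p i = 1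

/-- Multiset of nonzero Schmidt coefficients of `ψ` (eigenvalues of the reduced
density matrix). -/
def schmidtMultiset {m n : ℕ} (ψ : HT m n) (h : (ptrace2 (proj ψ)).IsHermitian) :
    Multiset ℝ :=
  (Finset.univ.val.map h.eigenvalues).filter (· ≠ 0)

/-- Trace norm of a matrix. -/
def trNorm {a b : ℕ} (A : Matrix (Fin a) (Fin b) ℂ) : ℝ :=
  ∑ i, Real.sqrt ((Matrix.posSemidef_conjTranspose_mul_self A).1.eigenvalues i)

/-- The greatest cross norm. -/
def gcn {m n : ℕ} (M : Matrix (Fin m × Fin n) (Fin m × Fin n) ℂ) : ℝ :=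
  sInf { t : ℝ | ∃ (k : ℕ) (x : Fin k → Matrix (Fin m) (Fin m) ℂ)
    (y : Fin k → Matrix (Fin n) (Fin n) ℂ),
    M = ∑ i, kron (x i) (y i) ∧ t = ∑ i, trNorm (x i) * trNorm (y i) }

/-- Density operator. -/
def IsDensity {d : Type*} [Fintype d] [DecidableEq d] (M : Matrix d d ℂ) : Prop :=
  M.PosSemidef ∧ M.trace = 1


namespace SvnP4Aux

open Polynomial

variable {s : ℕ}

lemma charmatrix_eq' (A : Matrix (Fin s) (Fin s) ℂ) :
    charmatrix A = (X : ℂ[X]) • (1 : Matrix (Fin s) (Fin s) ℂ[X]) - A.map C := by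
  rw [charmatrix, Matrix.smul_one_eq_diagonal, Matrix.scalar_apply, RingHom.mapMatrix_apply]

lemma charpoly_sim (U B V : Matrix (Fin s) (Fin s) ℂ) (h1 : U * V = 1) :
    (U * B * V).charpoly = B.charpoly := by
  have hmap1 : U.map C * V.map C = 1 := by
    rw [← Matrix.map_mul, h1, Matrix.map_one _ (map_zero C) (map_one C)]
  have key : charmatrix (U * B * V) = U.map C * charmatrix B * V.map C := by
    rw [charmatrix_eq', charmatrix_eq', mul_sub, sub_mul, mul_smul_comm, smul_mul_assoc,
      mul_one, hmap1, ← Matrix.map_mul, ← Matrix.map_mul]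
  rw [Matrix.charpoly, key, Matrix.det_mul, Matrix.det_mul, Matrix.charpoly]
  calc (U.map C).det * (charmatrix B).det * (V.map C).det
      = (U.map C).det * (V.map C).det * (charmatrix B).det := by ring
    _ = (U.map C * V.map C).det * (charmatrix B).det := by rw [Matrix.det_mul]
    _ = (charmatrix B).det := by rw [hmap1, Matrix.det_one, one_mul]

lemma charpoly_diag (d : Fin s → ℂ) :
    (Matrix.diagonal d).charpoly = ∏ i, (X - C (d i)) := by
  have hcm : charmatrix (Matrix.diagonal d)
      = Matrix.diagonal fun i => (X : ℂ[X]) - C (d i) := by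
    rw [charmatrix, Matrix.scalar_apply, RingHom.mapMatrix_apply,
      Matrix.diagonal_map (map_zero C), Matrix.diagonal_sub]
  rw [Matrix.charpoly, hcm, Matrix.det_diagonal]

lemma charpoly_eig {A : Matrix (Fin s) (Fin s) ℂ} (hA : A.IsHermitian) :
    A.charpoly = ∏ i, (X - C ((hA.eigenvalues i : ℂ))) := by
  have hu := (Matrix.IsHermitian.eigenvectorUnitary hA).2
  conv_lhs => rw [hA.spectral_theorem, Unitary.conjStarAlgAut_apply]
  rw [charpoly_sim _ _ _ (Matrix.mem_unitaryGroup_iff.mp hu), charpoly_diag]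
  rfl

lemma sum_negMulLog_eq_of_prods {a b : Fin s → ℝ}
    (hab : (∏ i, (X - C ((a i : ℂ)))) = ∏ i, (X - C ((b i : ℂ)))) :
    ∑ i, Real.negMulLog (a i) = ∑ i, Real.negMulLog (b i) := by
  have key : Finset.univ.val.map (fun i => ((a i : ℂ)))
      = Finset.univ.val.map (fun i => ((b i : ℂ))) := by
    have ha := Polynomial.roots_multiset_prod_X_sub_C
      (Finset.univ.val.map (fun i => ((a i : ℂ))))
    have hb := Polynomial.roots_multiset_prod_X_sub_C
      (Finset.univ.val.map (fun i => ((b i : ℂ))))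
    rw [Multiset.map_map, ← Finset.prod_eq_multiset_prod] at ha hb
    rw [← ha, ← hb]
    have : (∏ i, (X - C ((a i : ℂ)))).roots = (∏ i, (X - C ((b i : ℂ)))).roots :=
      congrArg Polynomial.roots hab
    exact this
  have h2 := congrArg (fun t : Multiset ℂ => (t.map fun z => Real.negMulLog z.re).sum) key
  simpa [Multiset.map_map, Function.comp_def, Finset.sum_eq_multiset_sum] using h2

/-- Entropy-like sum over eigenvalues, as a total function of the matrix. -/
noncomputable def entSum (A : Matrix (Fin s) (Fin s) ℂ) : ℝ :=
  if hA : A.IsHermitian then ∑ i, Real.negMulLog (hA.eigenvalues i) else 0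

lemma entSum_eq_roots_sum {A : Matrix (Fin s) (Fin s) ℂ} (hA : A.IsHermitian) :
    entSum A = (A.charpoly.roots.map fun z => Real.negMulLog z.re).sum := by
  rw [entSum, dif_pos hA]
  have hr : A.charpoly.roots = Finset.univ.val.map (fun i => ((hA.eigenvalues i : ℂ))) := by
    rw [charpoly_eig hA]
    have h := Polynomial.roots_multiset_prod_X_sub_C
      (Finset.univ.val.map (fun i => ((hA.eigenvalues i : ℂ))))
    rw [Multiset.map_map, ← Finset.prod_eq_multiset_prod] at h
    have e : (∏ i, (X - C ((hA.eigenvalues i : ℂ))))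
        = ∏ x, ((fun a => X - C a) ∘ fun i => ((hA.eigenvalues i : ℂ))) x := rfl
    rw [e]
    exact h
  rw [hr, Multiset.map_map, Finset.sum_eq_multiset_sum]
  refine congrArg Multiset.sum (Multiset.map_congr rfl fun i _ => ?_)
  show Real.negMulLog (hA.eigenvalues i) = Real.negMulLog ((((hA.eigenvalues i : ℂ))).re)
  rw [Complex.ofReal_re]

lemma entSum_conj_diag (U : Matrix (Fin s) (Fin s) ℂ) (h1 : U * star U = 1)
    (d : Fin s → ℝ) :
    entSum (U * Matrix.diagonal (fun i => ((d i : ℂ))) * star U)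
      = ∑ i, Real.negMulLog (d i) := by
  have hherm : (U * Matrix.diagonal (fun i => ((d i : ℂ))) * star U).IsHermitian := by
    have hd : (Matrix.diagonal (fun i => ((d i : ℂ)))).IsHermitian :=
      Matrix.isHermitian_diagonal_of_self_adjoint _
        (funext fun i => Complex.conj_ofReal (d i))
    show _ = _
    calc (U * Matrix.diagonal (fun i => ((d i : ℂ))) * star U)ᴴ
        = (star U)ᴴ * ((Matrix.diagonal (fun i => ((d i : ℂ))))ᴴ * Uᴴ) := by
          rw [Matrix.conjTranspose_mul, Matrix.conjTranspose_mul]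
      _ = U * Matrix.diagonal (fun i => ((d i : ℂ))) * star U := by
          simp [hd.eq, Matrix.star_eq_conjTranspose, Matrix.mul_assoc]
  rw [entSum, dif_pos hherm]
  apply sum_negMulLog_eq_of_prods
  rw [← charpoly_eig hherm, ← charpoly_diag (fun i => ((d i : ℂ)))]
  exact charpoly_sim _ _ _ h1

lemma entSum_zero : entSum (0 : Matrix (Fin s) (Fin s) ℂ) = 0 := by
  have h := entSum_conj_diag (1 : Matrix (Fin s) (Fin s) ℂ) (by simp) (fun _ => (0 : ℝ))
  simpa using h

lemma entSum_add {A B : Matrix (Fin s) (Fin s) ℂ} (hA : A.IsHermitian) (hB : B.IsHermitian)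
    (hAB : A * B = 0) : entSum (A + B) = entSum A + entSum B := by
  have hC : (A + B).IsHermitian := hA.add hB
  have h0 : A.map C * B.map C = 0 := by
    rw [← Matrix.map_mul, hAB]
    exact Matrix.map_zero _ (map_zero C)
  have key : charmatrix A * charmatrix B
      = ((X : ℂ[X]) • (1 : Matrix (Fin s) (Fin s) ℂ[X])) * charmatrix (A + B) := by
    rw [charmatrix_eq', charmatrix_eq', charmatrix_eq',
      Matrix.map_add _ (fun a b => map_add C a b)]
    simp only [sub_mul, mul_sub, mul_add, smul_mul_assoc, mul_smul_comm, one_mul, mul_one,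
      h0, sub_zero]
    module
  have hchar : A.charpoly * B.charpoly = (X : ℂ[X]) ^ s * (A + B).charpoly := by
    have hdet := congrArg Matrix.det key
    rw [Matrix.det_mul, Matrix.det_mul, Matrix.det_smul, Matrix.det_one, mul_one,
      Fintype.card_fin] at hdet
    exact hdet
  have hne : A.charpoly * B.charpoly ≠ 0 :=
    ((A.charpoly_monic).mul (B.charpoly_monic)).ne_zero
  have h1 : A.charpoly.roots + B.charpoly.roots
      = ((X : ℂ[X]) ^ s).roots + (A + B).charpoly.roots := by
    rw [← Polynomial.roots_mul hne, hchar, Polynomial.roots_mul (hchar ▸ hne)]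
  have hmap := congrArg (fun t : Multiset ℂ => (t.map fun z => Real.negMulLog z.re).sum) h1
  simp only [Multiset.map_add, Multiset.sum_add, Polynomial.roots_pow, Polynomial.roots_X,
    Multiset.nsmul_singleton, Multiset.map_replicate, Multiset.sum_replicate, Complex.zero_re,
    Real.negMulLog_zero, smul_zero, zero_add] at hmap
  rw [entSum_eq_roots_sum hA, entSum_eq_roots_sum hB, entSum_eq_roots_sum hC, ← hmap]

lemma entSum_sum {k : ℕ} (A : Fin k → Matrix (Fin s) (Fin s) ℂ)
    (hA : ∀ i, (A i).IsHermitian) (hmul : ∀ i j, i ≠ j → A i * A j = 0) :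
    entSum (∑ i, A i) = ∑ i, entSum (A i) := by
  classical
  have H : ∀ t : Finset (Fin k),
      entSum (∑ i ∈ t, A i) = ∑ i ∈ t, entSum (A i) := by
    intro t
    induction t using Finset.induction_on with
    | empty => simpa using (entSum_zero (s := s))
    | insert x t hx ih =>
      have hsumherm : (∑ i ∈ t, A i).IsHermitian := by
        rw [Matrix.IsHermitian, Matrix.conjTranspose_sum]
        exact Finset.sum_congr rfl fun i _ => (hA i).eq
      have hxmul : A x * (∑ i ∈ t, A i) = 0 := by
        rw [Finset.mul_sum]
        exact Finset.sum_eq_zero fun j hj => hmul x j (by rintro rfl; exact hx hj)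
      rw [Finset.sum_insert hx, Finset.sum_insert hx, entSum_add (hA x) hsumherm hxmul, ih]
  exact H Finset.univ

lemma smul_conj_diag (U : Matrix (Fin s) (Fin s) ℂ) (d : Fin s → ℝ) (p : ℝ) :
    (p : ℂ) • (U * Matrix.diagonal (fun i => ((d i : ℂ))) * star U)
      = U * Matrix.diagonal (fun i => ((p * d i : ℝ) : ℂ)) * star U := by
  have hd : Matrix.diagonal (fun i => ((p * d i : ℝ) : ℂ))
      = (p : ℂ) • Matrix.diagonal (fun i => ((d i : ℂ))) := by
    ext i j
    rw [Matrix.smul_apply]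
    by_cases hij : i = j
    · subst hij
      rw [Matrix.diagonal_apply_eq, Matrix.diagonal_apply_eq, smul_eq_mul]
      push_cast
      ring
    · rw [Matrix.diagonal_apply_ne _ hij, Matrix.diagonal_apply_ne _ hij, smul_zero]
  rw [hd, Matrix.mul_smul, Matrix.smul_mul]

lemma sum_eigenvalues_eq_one {A : Matrix (Fin s) (Fin s) ℂ} (hA : A.IsHermitian)
    (htr : A.trace = 1) : ∑ i, hA.eigenvalues i = 1 := by
  have hu := (Matrix.IsHermitian.eigenvectorUnitary hA).2
  have h1 : A.trace = ∑ i, ((hA.eigenvalues i : ℂ)) := by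
    conv_lhs => rw [hA.spectral_theorem, Unitary.conjStarAlgAut_apply]
    rw [Matrix.trace_mul_comm, ← Matrix.mul_assoc,
      Matrix.mem_unitaryGroup_iff'.mp hu, one_mul, Matrix.trace_diagonal]
    rfl
  rw [htr] at h1
  have h2 : ((1 : ℝ) : ℂ) = ((∑ i, hA.eigenvalues i : ℝ) : ℂ) := by
    push_cast
    simpa using h1
  exact_mod_cast h2.symm

end SvnP4Aux

section CrossLemmas

open SvnP4Aux

lemma cross_zero {m n : ℕ} (a b : HT m n)
    (hab : ptrace1 (proj a) * ptrace1 (proj b) = 0) (x y : Fin m) :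
    ∑ kk : Fin n, a (x, kk) * (starRingEnd ℂ) (b (y, kk)) = 0 := by
  classical
  set A : Matrix (Fin m) (Fin n) ℂ := Matrix.of fun x kk => a (x, kk) with hA
  set B : Matrix (Fin m) (Fin n) ℂ := Matrix.of fun y kk => b (y, kk) with hB
  have ha' : ptrace1 (proj a) = (Aᴴ * A)ᵀ := by
    ext u v
    simp only [ptrace1, proj, Matrix.of_apply, Matrix.transpose_apply, Matrix.mul_apply,
      Matrix.conjTranspose_apply, hA, RCLike.star_def]
    exact Finset.sum_congr rfl fun w _ => by ring
  have hb' : ptrace1 (proj b) = (Bᴴ * B)ᵀ := by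
    ext u v
    simp only [ptrace1, proj, Matrix.of_apply, Matrix.transpose_apply, Matrix.mul_apply,
      Matrix.conjTranspose_apply, hB, RCLike.star_def]
    exact Finset.sum_congr rfl fun w _ => by ring
  rw [ha', hb', ← Matrix.transpose_mul] at hab
  rw [Matrix.transpose_eq_zero] at hab
  rw [Matrix.mul_conjTranspose_mul_self_eq_zero] at hab
  rw [Matrix.conjTranspose_mul_self_mul_eq_zero] at hab
  have hone : A * Bᴴ = 0 := by
    have h := congrArg Matrix.conjTranspose hab
    simpa [Matrix.conjTranspose_mul] using h
  have h2 : (A * Bᴴ) x y = 0 := by rw [hone]; rfl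
  rw [Matrix.mul_apply] at h2
  simpa [Matrix.conjTranspose_apply, hA, hB, RCLike.star_def] using h2

lemma ptrace2_decomp {m n k : ℕ} (ψ : Fin k → HT m n)
    (horth : ∀ i j, i ≠ j → SchmidtOrthogonal (ψ i) (ψ j)) (lam : Fin k → ℂ) :
    ptrace2 (proj (∑ i, lam i • ψ i))
      = ∑ i, ((‖lam i‖ ^ 2 : ℝ) : ℂ) • ptrace2 (proj (ψ i)) := by
  classical
  have expand : ∀ p : Fin m × Fin n, (∑ i, lam i • ψ i) p = ∑ i, lam i * ψ i p := by
    intro p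
    have H : ∀ t : Finset (Fin k), (∑ i ∈ t, lam i • ψ i) p = ∑ i ∈ t, lam i * ψ i p := by
      intro t
      induction t using Finset.induction_on with
      | empty => rfl
      | insert x t hx ih =>
        rw [Finset.sum_insert hx, Finset.sum_insert hx, PiLp.add_apply, ih, PiLp.smul_apply,
          smul_eq_mul]
    exact H Finset.univ
  ext x y
  calc ptrace2 (proj (∑ i, lam i • ψ i)) x y
      = ∑ kk, (∑ i, lam i * ψ i (x, kk)) * (starRingEnd ℂ) (∑ j, lam j * ψ j (y, kk)) := by
        simp [ptrace2, proj, expand]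
    _ = ∑ kk, ∑ i, ∑ j, (lam i * (starRingEnd ℂ) (lam j))
          * (ψ i (x, kk) * (starRingEnd ℂ) (ψ j (y, kk))) := by
        refine Finset.sum_congr rfl fun kk _ => ?_
        rw [map_sum, Finset.sum_mul_sum]
        refine Finset.sum_congr rfl fun i _ => Finset.sum_congr rfl fun j _ => ?_
        rw [_root_.map_mul]
        ring
    _ = ∑ i, ∑ j, (lam i * (starRingEnd ℂ) (lam j))
          * ∑ kk, ψ i (x, kk) * (starRingEnd ℂ) (ψ j (y, kk)) := by
        rw [Finset.sum_comm]
        refine Finset.sum_congr rfl fun i _ => ?_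
        rw [Finset.sum_comm]
        refine Finset.sum_congr rfl fun j _ => ?_
        rw [Finset.mul_sum]
    _ = ∑ i, ((‖lam i‖ ^ 2 : ℝ) : ℂ)
          * ∑ kk, ψ i (x, kk) * (starRingEnd ℂ) (ψ i (y, kk)) := by
        refine Finset.sum_congr rfl fun i _ => ?_
        rw [Finset.sum_eq_single i]
        · congr 1
          rw [Complex.mul_conj, Complex.normSq_eq_norm_sq]
        · intro j _ hji
          rw [cross_zero (ψ i) (ψ j) (horth i j (Ne.symm hji)).2 x y, mul_zero]
        · intro hnot
          exact absurd (Finset.mem_univ i) hnot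
    _ = (∑ i, ((‖lam i‖ ^ 2 : ℝ) : ℂ) • ptrace2 (proj (ψ i))) x y := by
        simp [ptrace2, proj, Matrix.sum_apply, Finset.mul_sum]

lemma trace_ptrace2_proj {m n : ℕ} (ψ : HT m n) (hψ : ‖ψ‖ = 1) :
    (ptrace2 (proj ψ)).trace = 1 := by
  have hn : ∑ p : Fin m × Fin n, ‖ψ p‖ ^ 2 = 1 := by
    have h := EuclideanSpace.norm_eq ψ
    rw [hψ] at h
    exact Real.sqrt_eq_one.mp h.symm
  have key : (ptrace2 (proj ψ)).trace = ∑ p : Fin m × Fin n, ((‖ψ p‖ ^ 2 : ℝ) : ℂ) := by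
    rw [Matrix.trace]
    calc ∑ i, (ptrace2 (proj ψ)).diag i
        = ∑ i : Fin m, ∑ kk : Fin n, ((‖ψ (i, kk)‖ ^ 2 : ℝ) : ℂ) := by
          refine Finset.sum_congr rfl fun i _ => ?_
          simp only [Matrix.diag, ptrace2, proj, Matrix.of_apply]
          refine Finset.sum_congr rfl fun kk _ => ?_
          rw [Complex.mul_conj, Complex.normSq_eq_norm_sq]
      _ = ∑ p : Fin m × Fin n, ((‖ψ p‖ ^ 2 : ℝ) : ℂ) := by rw [Fintype.sum_prod_type]
  rw [key, ← Complex.ofReal_sum, hn, Complex.ofReal_one]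

end CrossLemmas

/-- The von Neumann reduced entropy satisfies the superposition axiom (P4) for
mutually Schmidt orthogonal pure states. -/
theorem svn_satisfies_P4 {m n k : ℕ} (ψ : Fin k → HT m n)
    (hunit : ∀ i, ‖ψ i‖ = 1)
    (horth : ∀ i j, i ≠ j → SchmidtOrthogonal (ψ i) (ψ j))
    (lam : Fin k → ℂ) (hlam : (∑ i, ‖lam i‖ ^ 2) = 1)
    (h : (ptrace2 (proj (∑ i, lam i • ψ i))).IsHermitian)
    (hi : ∀ i, (ptrace2 (proj (ψ i))).IsHermitian) :
    vnEnt h = (∑ i, Real.negMulLog (‖lam i‖ ^ 2))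
      + ∑ i, ‖lam i‖ ^ 2 * vnEnt (hi i) := by
  classical
  have hB : ∀ i, (((‖lam i‖ ^ 2 : ℝ) : ℂ) • ptrace2 (proj (ψ i))).IsHermitian := by
    intro i
    show _ = _
    rw [Matrix.conjTranspose_smul, (hi i).eq, Complex.star_def, Complex.conj_ofReal]
  have hBmul : ∀ i j, i ≠ j →
      (((‖lam i‖ ^ 2 : ℝ) : ℂ) • ptrace2 (proj (ψ i)))
        * (((‖lam j‖ ^ 2 : ℝ) : ℂ) • ptrace2 (proj (ψ j))) = 0 := by
    intro i j hij
    rw [Matrix.smul_mul, Matrix.mul_smul, (horth i j hij).1, smul_zero, smul_zero]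
  have h0 : vnEnt h = SvnP4Aux.entSum (ptrace2 (proj (∑ i, lam i • ψ i))) := (dif_pos h).symm
  rw [h0, ptrace2_decomp ψ horth lam, SvnP4Aux.entSum_sum _ hB hBmul]
  have hterm : ∀ i, SvnP4Aux.entSum (((‖lam i‖ ^ 2 : ℝ) : ℂ) • ptrace2 (proj (ψ i)))
      = Real.negMulLog (‖lam i‖ ^ 2) + ‖lam i‖ ^ 2 * vnEnt (hi i) := by
    intro i
    have hu := (Matrix.IsHermitian.eigenvectorUnitary (hi i)).2
    have hspec := (hi i).spectral_theorem
    rw [Unitary.conjStarAlgAut_apply] at hspec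
    have hdiag : (RCLike.ofReal ∘ (hi i).eigenvalues : Fin m → ℂ)
        = fun j => (((hi i).eigenvalues j : ℝ) : ℂ) := rfl
    conv_lhs => rw [hspec, hdiag]
    rw [SvnP4Aux.smul_conj_diag,
      SvnP4Aux.entSum_conj_diag _ (Matrix.mem_unitaryGroup_iff.mp hu)]
    have htr : ∑ j, (hi i).eigenvalues j = 1 :=
      SvnP4Aux.sum_eigenvalues_eq_one (hi i) (trace_ptrace2_proj (ψ i) (hunit i))
    calc ∑ j, Real.negMulLog (‖lam i‖ ^ 2 * (hi i).eigenvalues j)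
        = ∑ j, ((hi i).eigenvalues j * Real.negMulLog (‖lam i‖ ^ 2)
            + ‖lam i‖ ^ 2 * Real.negMulLog ((hi i).eigenvalues j)) :=
          Finset.sum_congr rfl fun j _ => Real.negMulLog_mul _ _
      _ = (∑ j, (hi i).eigenvalues j) * Real.negMulLog (‖lam i‖ ^ 2)
            + ‖lam i‖ ^ 2 * ∑ j, Real.negMulLog ((hi i).eigenvalues j) := by
          rw [Finset.sum_add_distrib, Finset.sum_mul, Finset.mul_sum]
      _ = Real.negMulLog (‖lam i‖ ^ 2) + ‖lam i‖ ^ 2 * vnEnt (hi i) := by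
          rw [htr, one_mul]
          rfl
  calc ∑ i, SvnP4Aux.entSum (((‖lam i‖ ^ 2 : ℝ) : ℂ) • ptrace2 (proj (ψ i)))
      = ∑ i, (Real.negMulLog (‖lam i‖ ^ 2) + ‖lam i‖ ^ 2 * vnEnt (hi i)) :=
        Finset.sum_congr rfl fun i _ => hterm i
    _ = (∑ i, Real.negMulLog (‖lam i‖ ^ 2)) + ∑ i, ‖lam i‖ ^ 2 * vnEnt (hi i) :=
        Finset.sum_add_distrib

end
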